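/- Let G be an abelian group containing two independent elements e_1, e_2 of order 3. Then the zero-sum sequence B = (e_1+e_2)^4 · e_1^2 · e_2^2 over G has catenary degree c(B) = 2. -/
import Mathlib


/-- A minimal zero-sum sequence over the abelian group `G`: a nonempty zero-sum
multiset none of whose proper nonempty sub-multisets has sum zero. -/
def IsMinZeroSum {G : Type*} [AddCommGroup G] (S : Multiset G) : Prop :=
  S ≠ 0 ∧ S.sum = 0 ∧ ∀ T ≤ S, T ≠ 0 → T.sum = 0 → T = S

/-- A factorization of a zero-sum sequence `B` into atoms of `B(G)`. -/
def IsFactorization {G : Type*} [AddCommGroup G] (B : Multiset G)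
    (z : Multiset (Multiset G)) : Prop :=
  (∀ A ∈ z, IsMinZeroSum A) ∧ z.sum = B

/-- The usual distance between two factorizations. -/
noncomputable def factDist {G : Type*} [AddCommGroup G] (z z' : Multiset (Multiset G)) : ℕ :=
  letI := Classical.decEq (Multiset G)
  max (z - z').card (z' - z).card

/-- The catenary degree of `B ∈ B(G)`: the least `N` such that any two factorizations
of `B` can be concatenated by a chain of factorizations with consecutive distances `≤ N`. -/
noncomputable def catenaryDeg {G : Type*} [AddCommGroup G] (B : Multiset G) : ℕ :=
  sInf {N : ℕ | ∀ z z', IsFactorization B z → IsFactorization B z' →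
    Relation.ReflTransGen (fun x y => IsFactorization B y ∧ factDist x y ≤ N) z z'}

/-- The tame degree `t(A, U)` of `A ∈ B(G)` with respect to the atom `U`. -/
noncomputable def tameDeg {G : Type*} [AddCommGroup G] (A U : Multiset G) : ℕ :=
  sInf {N : ℕ | ∀ z, IsFactorization A z →
    (∃ z', IsFactorization A z' ∧ U ∈ z') →
    ∃ z', IsFactorization A z' ∧ U ∈ z' ∧ factDist z z' ≤ N}

/-- The set of (positive) tame degrees of `B(G)`. -/
noncomputable def TaSet (G : Type*) [AddCommGroup G] : Set ℕ :=
  {n | 0 < n ∧ ∃ A U : Multiset G, A.sum = 0 ∧ IsMinZeroSum U ∧ tameDeg A U = n}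

/-- The Davenport constant of `G`: the supremum of lengths of minimal zero-sum sequences. -/
noncomputable def davenport (G : Type*) [AddCommGroup G] : ℕ :=
  sSup {n : ℕ | ∃ A : Multiset G, IsMinZeroSum A ∧ A.card = n}


section
variable {G : Type*} [AddCommGroup G]

def mk3 (e₁ e₂ : G) (a b c : ℕ) : Multiset G :=
  Multiset.replicate a (e₁ + e₂) + Multiset.replicate b e₁ + Multiset.replicate c e₂

lemma mk3_add (e₁ e₂ : G) (a b c a' b' c' : ℕ) :
    mk3 e₁ e₂ a b c + mk3 e₁ e₂ a' b' c' = mk3 e₁ e₂ (a+a') (b+b') (c+c') := by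
  simp [mk3, Multiset.replicate_add]; abel

lemma card_mk3 (e₁ e₂ : G) (a b c : ℕ) : (mk3 e₁ e₂ a b c).card = a + b + c := by
  simp [mk3]

lemma sum_mk3 (e₁ e₂ : G) (a b c : ℕ) :
    (mk3 e₁ e₂ a b c).sum = (a + b) • e₁ + (a + c) • e₂ := by
  simp [mk3, Multiset.sum_replicate, smul_add, add_nsmul]; abel

lemma count_mk3 (e₁ e₂ : G) (a b c : ℕ) (g : G) [DecidableEq G] :
    (mk3 e₁ e₂ a b c).count g =
      (if e₁ + e₂ = g then a else 0) + (if e₁ = g then b else 0) + (if e₂ = g then c else 0) := by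
  simp [mk3, Multiset.count_replicate]

end
section
variable {G : Type*} [AddCommGroup G] {e₁ e₂ : G}
  (h1 : addOrderOf e₁ = 3) (h2 : addOrderOf e₂ = 3)
  (hind : ∀ x : G, x ∈ AddSubgroup.zmultiples e₁ → x ∈ AddSubgroup.zmultiples e₂ → x = 0)

set_option linter.unusedSectionVars false
include h1 h2 hind

lemma stmt6_ne1 : e₁ ≠ 0 := by
  intro h; rw [h, addOrderOf_zero] at h1; omega

lemma stmt6_ne2 : e₂ ≠ 0 := by
  intro h; rw [h, addOrderOf_zero] at h2; omega

lemma stmt6_ne12 : e₁ ≠ e₂ := by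
  intro h
  exact stmt6_ne1 h1 h2 hind (hind e₁ (AddSubgroup.mem_zmultiples e₁) (h ▸ AddSubgroup.mem_zmultiples e₂))

lemma stmt6_nex1 : e₁ + e₂ ≠ e₁ := by
  simpa using stmt6_ne2 h1 h2 hind

lemma stmt6_nex2 : e₁ + e₂ ≠ e₂ := by
  intro h
  exact stmt6_ne1 h1 h2 hind (add_eq_right.mp h)

lemma stmt6_dvd3 {b c : ℕ} (h : b • e₁ + c • e₂ = 0) : 3 ∣ b ∧ 3 ∣ c := by
  have hb1 : b • e₁ ∈ AddSubgroup.zmultiples e₁ :=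
    AddSubgroup.nsmul_mem _ (AddSubgroup.mem_zmultiples e₁) b
  have hb2 : b • e₁ ∈ AddSubgroup.zmultiples e₂ := by
    have : b • e₁ = -(c • e₂) := eq_neg_of_add_eq_zero_left h
    rw [this]
    exact neg_mem (AddSubgroup.nsmul_mem _ (AddSubgroup.mem_zmultiples e₂) c)
  have hb : b • e₁ = 0 := hind _ hb1 hb2
  have hc : c • e₂ = 0 := by rwa [hb, zero_add] at h
  constructor
  · rw [← h1]; exact addOrderOf_dvd_of_nsmul_eq_zero hb
  · rw [← h2]; exact addOrderOf_dvd_of_nsmul_eq_zero hc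

end
section
variable {G : Type*} [AddCommGroup G] {e₁ e₂ : G}
  (h1 : addOrderOf e₁ = 3) (h2 : addOrderOf e₂ = 3)
  (hind : ∀ x : G, x ∈ AddSubgroup.zmultiples e₁ → x ∈ AddSubgroup.zmultiples e₂ → x = 0)

set_option linter.unusedSectionVars false
include h1 h2 hind

open Multiset in
lemma stmt6_canon (A : Multiset G) (hA : A ≤ mk3 e₁ e₂ 4 2 2) :
    letI := Classical.decEq G
    A = mk3 e₁ e₂ (A.count (e₁ + e₂)) (A.count e₁) (A.count e₂) ∧
    A.count (e₁ + e₂) ≤ 4 ∧ A.count e₁ ≤ 2 ∧ A.count e₂ ≤ 2 := by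
  classical
  have hx1 := stmt6_nex1 h1 h2 hind
  have hx2 := stmt6_nex2 h1 h2 hind
  have h12 := stmt6_ne12 h1 h2 hind
  refine ⟨?_, ?_, ?_, ?_⟩
  · ext g
    rw [count_mk3]
    by_cases hgx : e₁ + e₂ = g
    · subst hgx; simp [hx1.symm, hx2.symm]
    · by_cases hg1 : e₁ = g
      · subst hg1; simp [hgx, Ne.symm h12]
      · by_cases hg2 : e₂ = g
        · subst hg2; simp [hgx, hg1]
        · have h := count_le_of_le g hA
          rw [count_mk3] at h
          simp only [hgx, hg1, hg2, if_false] at h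
          simp [hgx, hg1, hg2]
          exact Multiset.count_eq_zero.mp (Nat.le_zero.mp (by simpa using h))
  · have h := count_le_of_le (e₁ + e₂) hA
    rw [count_mk3] at h
    simpa [hx1.symm, hx2.symm] using h
  · have h := count_le_of_le e₁ hA
    rw [count_mk3] at h
    simpa [hx1, Ne.symm h12] using h
  · have h := count_le_of_le e₂ hA
    rw [count_mk3] at h
    simpa [hx2, h12] using h

lemma stmt6_sub_class (A : Multiset G) (hA : A ≤ mk3 e₁ e₂ 4 2 2) (h0 : A.sum = 0) :
    A = 0 ∨ A = mk3 e₁ e₂ 3 0 0 ∨ A = mk3 e₁ e₂ 2 1 1 ∨ A = mk3 e₁ e₂ 1 2 2 ∨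
      A = mk3 e₁ e₂ 4 2 2 := by
  classical
  obtain ⟨hrep, ha, hb, hc⟩ := stmt6_canon h1 h2 hind A hA
  set a := A.count (e₁ + e₂)
  set b := A.count e₁
  set c := A.count e₂
  rw [hrep, sum_mk3] at h0
  obtain ⟨hab, hac⟩ := stmt6_dvd3 h1 h2 hind h0
  have hcase : (a=0∧b=0∧c=0) ∨ (a=3∧b=0∧c=0) ∨ (a=2∧b=1∧c=1) ∨ (a=1∧b=2∧c=2) ∨
      (a=4∧b=2∧c=2) := by omega
  rcases hcase with ⟨ra,rb,rc⟩|⟨ra,rb,rc⟩|⟨ra,rb,rc⟩|⟨ra,rb,rc⟩|⟨ra,rb,rc⟩ <;>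
    rw [ra, rb, rc] at hrep
  · left; rw [hrep]; simp [mk3]
  · right; left; exact hrep
  · right; right; left; exact hrep
  · right; right; right; left; exact hrep
  · right; right; right; right; exact hrep

end

section
variable {G : Type*} [AddCommGroup G] {e₁ e₂ : G}
  (h1 : addOrderOf e₁ = 3) (h2 : addOrderOf e₂ = 3)
  (hind : ∀ x : G, x ∈ AddSubgroup.zmultiples e₁ → x ∈ AddSubgroup.zmultiples e₂ → x = 0)

set_option linter.unusedSectionVars false
include h1 h2 hind

lemma stmt6_count_x [DecidableEq G] (a b c : ℕ) :
    (mk3 e₁ e₂ a b c).count (e₁ + e₂) = a := by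
  rw [count_mk3]
  simp [Ne.symm (stmt6_nex1 h1 h2 hind), Ne.symm (stmt6_nex2 h1 h2 hind)]

lemma stmt6_count_e1 [DecidableEq G] (a b c : ℕ) :
    (mk3 e₁ e₂ a b c).count e₁ = b := by
  rw [count_mk3]
  simp [stmt6_nex1 h1 h2 hind, Ne.symm (stmt6_ne12 h1 h2 hind)]

lemma stmt6_sum3 : (3 : ℕ) • e₁ + (3 : ℕ) • e₂ = 0 := by
  rw [← h1, addOrderOf_nsmul_eq_zero e₁, h1, ← h2, addOrderOf_nsmul_eq_zero e₂, add_zero]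

lemma stmt6_atomU : IsMinZeroSum (mk3 e₁ e₂ 3 0 0) := by
  classical
  refine ⟨?_, ?_, ?_⟩
  · intro h
    have := congrArg Multiset.card h
    rw [card_mk3] at this; simp at this
  · rw [sum_mk3]; exact stmt6_sum3 h1 h2 hind
  · intro T hT hT0 hTsum
    have hUB : mk3 e₁ e₂ 3 0 0 ≤ mk3 e₁ e₂ 4 2 2 := by
      unfold mk3
      refine add_le_add (add_le_add ?_ ?_) ?_ <;>
        rw [Multiset.replicate_le_replicate] <;> omega
    have hTU : T.card ≤ 3 := by
      have := Multiset.card_le_card hT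
      rwa [card_mk3] at this
    rcases stmt6_sub_class h1 h2 hind T (le_trans hT hUB) hTsum with rfl|h|h|h|h
    · exact absurd rfl hT0
    · exact h
    all_goals (exfalso; rw [h] at hTU; rw [card_mk3] at hTU; omega)

lemma stmt6_atomX : IsMinZeroSum (mk3 e₁ e₂ 2 1 1) := by
  classical
  refine ⟨?_, ?_, ?_⟩
  · intro h
    have := congrArg Multiset.card h
    rw [card_mk3] at this; simp at this
  · rw [sum_mk3]; exact stmt6_sum3 h1 h2 hind
  · intro T hT hT0 hTsum
    have hXB : mk3 e₁ e₂ 2 1 1 ≤ mk3 e₁ e₂ 4 2 2 := by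
      unfold mk3
      refine add_le_add (add_le_add ?_ ?_) ?_ <;>
        rw [Multiset.replicate_le_replicate] <;> omega
    have hTc : T.card ≤ 4 := by
      have := Multiset.card_le_card hT
      rwa [card_mk3] at this
    have hTx : T.count (e₁ + e₂) ≤ 2 := by
      have := Multiset.count_le_of_le (e₁ + e₂) hT
      rwa [stmt6_count_x h1 h2 hind] at this
    rcases stmt6_sub_class h1 h2 hind T (le_trans hT hXB) hTsum with rfl|h|h|h|h
    · exact absurd rfl hT0
    · exfalso; rw [h, stmt6_count_x h1 h2 hind] at hTx; omega
    · exact h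
    all_goals (exfalso; rw [h] at hTc; rw [card_mk3] at hTc; omega)

lemma stmt6_atomW : IsMinZeroSum (mk3 e₁ e₂ 1 2 2) := by
  classical
  refine ⟨?_, ?_, ?_⟩
  · intro h
    have := congrArg Multiset.card h
    rw [card_mk3] at this; simp at this
  · rw [sum_mk3]; exact stmt6_sum3 h1 h2 hind
  · intro T hT hT0 hTsum
    have hWB : mk3 e₁ e₂ 1 2 2 ≤ mk3 e₁ e₂ 4 2 2 := by
      unfold mk3
      refine add_le_add (add_le_add ?_ ?_) ?_ <;>
        rw [Multiset.replicate_le_replicate] <;> omega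
    have hTc : T.card ≤ 5 := by
      have := Multiset.card_le_card hT
      rwa [card_mk3] at this
    have hTx : T.count (e₁ + e₂) ≤ 1 := by
      have := Multiset.count_le_of_le (e₁ + e₂) hT
      rwa [stmt6_count_x h1 h2 hind] at this
    rcases stmt6_sub_class h1 h2 hind T (le_trans hT hWB) hTsum with rfl|h|h|h|h
    · exact absurd rfl hT0
    · exfalso; rw [h, stmt6_count_x h1 h2 hind] at hTx; omega
    · exfalso; rw [h, stmt6_count_x h1 h2 hind] at hTx; omega
    · exact h
    · exfalso; rw [h] at hTc; rw [card_mk3] at hTc; omega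

end
section
variable {G : Type*} [AddCommGroup G] {e₁ e₂ : G}
  (h1 : addOrderOf e₁ = 3) (h2 : addOrderOf e₂ = 3)
  (hind : ∀ x : G, x ∈ AddSubgroup.zmultiples e₁ → x ∈ AddSubgroup.zmultiples e₂ → x = 0)

set_option linter.unusedSectionVars false
include h1 h2 hind

lemma stmt6_ne_card {a b c a' b' c' : ℕ} (h : a + b + c ≠ a' + b' + c') :
    mk3 e₁ e₂ a b c ≠ mk3 e₁ e₂ a' b' c' := by
  intro he
  have := congrArg Multiset.card he
  rw [card_mk3, card_mk3] at this
  omega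

lemma stmt6_fact_class (z : Multiset (Multiset G))
    (hz : IsFactorization (mk3 e₁ e₂ 4 2 2) z) :
    z = {mk3 e₁ e₂ 2 1 1, mk3 e₁ e₂ 2 1 1} ∨ z = {mk3 e₁ e₂ 3 0 0, mk3 e₁ e₂ 1 2 2} := by
  classical
  obtain ⟨hatom, hsum⟩ := hz
  set U := mk3 e₁ e₂ 3 0 0 with hU
  set X := mk3 e₁ e₂ 2 1 1 with hX
  set W := mk3 e₁ e₂ 1 2 2 with hW
  have hmem : ∀ A ∈ z, A = U ∨ A = X ∨ A = W := by
    intro A hA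
    have hAle : A ≤ mk3 e₁ e₂ 4 2 2 := by
      rw [← hsum]
      obtain ⟨z', rfl⟩ := Multiset.exists_cons_of_mem hA
      rw [Multiset.sum_cons]
      exact Multiset.le_add_right _ _
    obtain ⟨hA0, hAs, hAmin⟩ := hatom A hA
    rcases stmt6_sub_class h1 h2 hind A hAle hAs with rfl|h|h|h|h
    · exact absurd rfl hA0
    · exact Or.inl h
    · exact Or.inr (Or.inl h)
    · exact Or.inr (Or.inr h)
    · exfalso
      subst h
      have hUle : U ≤ mk3 e₁ e₂ 4 2 2 := by
        rw [hU]; unfold mk3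
        refine add_le_add (add_le_add ?_ ?_) ?_ <;>
          rw [Multiset.replicate_le_replicate] <;> omega
      have hU0 : U ≠ 0 := by
        intro h0
        have := congrArg Multiset.card h0
        rw [hU, card_mk3] at this; simp at this
      have hUs : U.sum = 0 := by rw [hU, sum_mk3]; exact stmt6_sum3 h1 h2 hind
      have := hAmin U hUle hU0 hUs
      exact stmt6_ne_card h1 h2 hind (by omega : 3+0+0 ≠ 4+2+2) this
  have hUX : U ≠ X := stmt6_ne_card h1 h2 hind (by omega)
  have hUW : U ≠ W := stmt6_ne_card h1 h2 hind (by omega)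
  have hXW : X ≠ W := stmt6_ne_card h1 h2 hind (by omega)
  set u := z.count U with hu
  set w := z.count W with hw
  set xc := z.count X with hxc
  have hrep : z = Multiset.replicate u U + Multiset.replicate w W +
      Multiset.replicate xc X := by
    ext A
    simp only [Multiset.count_add, Multiset.count_replicate]
    by_cases hAU : A = U
    · subst hAU
      simp [hu, hUX, hUW, hXW, Ne.symm hUX, Ne.symm hUW, Ne.symm hXW]
    · by_cases hAW : A = W
      · subst hAW
        simp [hw, hUX, hUW, hXW, Ne.symm hUX, Ne.symm hUW, Ne.symm hXW]
      · by_cases hAX : A = X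
        · subst hAX
          simp [hxc, hUX, hUW, hXW, Ne.symm hUX, Ne.symm hUW, Ne.symm hXW]
        · have hnm : A ∉ z := by
            intro hA
            rcases hmem A hA with h|h|h <;> [exact hAU h; exact hAX h; exact hAW h]
          simp [Multiset.count_eq_zero.mpr hnm, Ne.symm hAU, Ne.symm hAW, Ne.symm hAX]
  have hsum' := hsum
  rw [hrep, Multiset.sum_add, Multiset.sum_add, Multiset.sum_replicate, Multiset.sum_replicate,
    Multiset.sum_replicate] at hsum'
  have hcx := congrArg (Multiset.count (e₁ + e₂)) hsum'
  have hce := congrArg (Multiset.count e₁) hsum'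
  simp only [Multiset.count_add, Multiset.count_nsmul, hU, hW, hX,
    stmt6_count_x h1 h2 hind, stmt6_count_e1 h1 h2 hind] at hcx hce
  have hcase : (u = 0 ∧ w = 0 ∧ xc = 2) ∨ (u = 1 ∧ w = 1 ∧ xc = 0) := by omega
  rcases hcase with ⟨r1, r2, r3⟩ | ⟨r1, r2, r3⟩ <;> rw [r1, r2, r3] at hrep
  · left; rw [hrep]; rfl
  · right; rw [hrep]; rfl

end

theorem stmt6 (G : Type*) [AddCommGroup G] (e₁ e₂ : G)
    (h1 : addOrderOf e₁ = 3) (h2 : addOrderOf e₂ = 3)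
    (hind : ∀ x : G, x ∈ AddSubgroup.zmultiples e₁ → x ∈ AddSubgroup.zmultiples e₂ → x = 0) :
    catenaryDeg (Multiset.replicate 4 (e₁ + e₂) + Multiset.replicate 2 e₁ +
      Multiset.replicate 2 e₂) = 2 := by
  letI : DecidableEq (Multiset G) := Classical.decEq _
  set B := mk3 e₁ e₂ 4 2 2 with hB
  have hBeq : Multiset.replicate 4 (e₁ + e₂) + Multiset.replicate 2 e₁ +
      Multiset.replicate 2 e₂ = B := rfl
  rw [hBeq]
  set U := mk3 e₁ e₂ 3 0 0 with hU
  set X := mk3 e₁ e₂ 2 1 1 with hX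
  set W := mk3 e₁ e₂ 1 2 2 with hW
  have hUX : U ≠ X := stmt6_ne_card h1 h2 hind (by omega)
  have hUW : U ≠ W := stmt6_ne_card h1 h2 hind (by omega)
  have hXW : X ≠ W := stmt6_ne_card h1 h2 hind (by omega)
  have hf₁ : IsFactorization B ({X, X} : Multiset (Multiset G)) := by
    constructor
    · intro A hA
      have hAX : A = X := by simpa using hA
      rw [hAX, hX]; exact stmt6_atomX h1 h2 hind
    · rw [Multiset.insert_eq_cons, Multiset.sum_cons, Multiset.sum_singleton, hX, hB, mk3_add]
  have hf₂ : IsFactorization B ({U, W} : Multiset (Multiset G)) := by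
    constructor
    · intro A hA
      have hA' : A = U ∨ A = W := by simpa using hA
      rcases hA' with h | h
      · rw [h, hU]; exact stmt6_atomU h1 h2 hind
      · rw [h, hW]; exact stmt6_atomW h1 h2 hind
    · rw [Multiset.insert_eq_cons, Multiset.sum_cons, Multiset.sum_singleton, hU, hW, hB, mk3_add]
  have hclass : ∀ z, IsFactorization B z →
      z = ({X, X} : Multiset (Multiset G)) ∨ z = ({U, W} : Multiset (Multiset G)) := by
    intro z hz
    rcases stmt6_fact_class h1 h2 hind z hz with h | h
    · left; rw [h, hX]
    · right; rw [h, hU, hW]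
  have hcard : ∀ z, IsFactorization B z → Multiset.card z = 2 := by
    intro z hz
    rcases hclass z hz with rfl | rfl <;> simp [Multiset.insert_eq_cons]
  have hdle : ∀ z z', IsFactorization B z → IsFactorization B z' → factDist z z' ≤ 2 := by
    intro z z' hz hz'
    unfold factDist
    apply max_le
    · exact le_trans (Multiset.card_le_card (tsub_le_self)) (le_of_eq (hcard z hz))
    · exact le_trans (Multiset.card_le_card (tsub_le_self)) (le_of_eq (hcard z' hz'))
  have hcXz2 : Multiset.count X ({U, W} : Multiset (Multiset G)) = 0 := by
    rw [Multiset.count_eq_zero]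
    intro h
    have h' : X = U ∨ X = W := by simpa using h
    rcases h' with h' | h'
    · exact hUX h'.symm
    · exact hXW h'
  have hsub : ({X, X} : Multiset (Multiset G)) - {U, W} = {X, X} := by
    ext A
    rw [Multiset.count_sub]
    by_cases hA : A = X
    · subst hA; rw [hcXz2, Nat.sub_zero]
    · have h0 : Multiset.count A ({X, X} : Multiset (Multiset G)) = 0 := by
        rw [Multiset.count_eq_zero]
        intro h
        exact hA (by simpa using h)
      rw [h0, Nat.zero_sub]
  have hd12 : 2 ≤ factDist ({X, X} : Multiset (Multiset G)) ({U, W} : Multiset (Multiset G)) := by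
    unfold factDist
    refine le_trans ?_ (le_max_left _ _)
    rw [hsub]
    simp [Multiset.insert_eq_cons]
  have h2mem : (2 : ℕ) ∈ {N : ℕ | ∀ z z', IsFactorization B z → IsFactorization B z' →
      Relation.ReflTransGen (fun x y => IsFactorization B y ∧ factDist x y ≤ N) z z'} := by
    intro z z' hz hz'
    exact Relation.ReflTransGen.single ⟨hz', hdle z z' hz hz'⟩
  unfold catenaryDeg
  refine le_antisymm (Nat.sInf_le h2mem) (le_csInf ⟨2, h2mem⟩ ?_)
  rintro n hn
  by_contra hlt
  push_neg at hlt
  have hchain := hn ({X, X} : Multiset (Multiset G)) ({U, W} : Multiset (Multiset G)) hf₁ hf₂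
  have key : ∀ y, Relation.ReflTransGen
      (fun x y => IsFactorization B y ∧ factDist x y ≤ n) ({X, X} : Multiset (Multiset G)) y →
      y = ({X, X} : Multiset (Multiset G)) := by
    intro y hy
    induction hy with
    | refl => rfl
    | tail hab hbc ih =>
      obtain ⟨hfc, hdc⟩ := hbc
      rw [ih] at hdc
      rcases hclass _ hfc with rfl | rfl
      · rfl
      · exact absurd (le_trans hd12 hdc) (by omega)
  have hfinal := key _ hchain
  have hXmem : X ∈ ({U, W} : Multiset (Multiset G)) := by
    rw [hfinal]; simp
  exact Multiset.count_eq_zero.mp hcXz2 hXmem
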